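/- arXiv:1312.5787 — 2 statements merged into one kernel-verified Lean document; each statement's English description precedes it below -/
import Mathlib

section
/- Let f ∈ L log L(B_r(x₀)) for r ∈ (0, 1/2], where B_r(x₀) ⊂ ℝ⁴. Then there exists a universal constant C > 0 such that ‖f‖_{L¹(B_r(x₀))} ≤ C (log(1/r))⁻¹ ‖f‖_{L log L(B_r(x₀))}. -/
open MeasureTheory Metric Real Filter

open scoped ENNReal

noncomputable section

abbrev E4 := EuclideanSpace ℝ (Fin 4)

/-- Non-increasing rearrangement of `|f|` on `[0, ∞)`. -/
def rearr (f : E4 → ℝ) (t : ℝ) : ℝ :=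
  sInf {s : ℝ | 0 ≤ s ∧ (volume {x : E4 | s < |f x|}).toReal ≤ t}

/-- The `L log L` seminorm of `f` on `Ω`:  `∫₀^{|Ω|} f*(t) log(2 + 1/t) dt`. -/
def LlogL (f : E4 → ℝ) (Ω : Set E4) : ℝ :=
  ∫ t in Set.Ioo 0 (volume Ω).toReal, rearr (Ω.indicator f) t * Real.log (2 + 1 / t)

/-- `f ∈ L log L(Ω)`. -/
def MemLlogL (f : E4 → ℝ) (Ω : Set E4) : Prop :=
  IntegrableOn (fun x => |f x| * Real.log (2 + |f x|)) Ω

def distFn (g : E4 → ℝ) (s : ℝ) : ℝ≥0∞ := volume {x : E4 | s < |g x|}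

lemma distFn_anti (g : E4 → ℝ) : Antitone (distFn g) := fun s₁ s₂ h =>
  measure_mono (fun x hx => lt_of_le_of_lt h hx)

lemma rearr_nonneg (g : E4 → ℝ) (t : ℝ) : 0 ≤ rearr g t :=
  Real.sInf_nonneg (fun _ hx => hx.1)

lemma distFn_sup (g : E4 → ℝ) (s : ℝ) :
    distFn g s = ⨆ n : ℕ, distFn g (s + 1/(n+1)) := by
  have hU : {x : E4 | s < |g x|} = ⋃ n : ℕ, {x : E4 | s + 1/(n+1) < |g x|} := by
    ext x
    simp only [Set.mem_setOf_eq, Set.mem_iUnion]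
    constructor
    · intro h
      obtain ⟨n, hn⟩ := exists_nat_one_div_lt (sub_pos.mpr h)
      exact ⟨n, by linarith⟩
    · rintro ⟨n, hn⟩
      have : (0:ℝ) < 1/(n+1) := by positivity
      linarith
  rw [distFn, hU]
  exact Directed.measure_iUnion (Monotone.directed_le (fun n m hnm x hx => by
    simp only [Set.mem_setOf_eq] at *
    have h1 : (1:ℝ)/(m+1) ≤ 1/(n+1) := by
      apply one_div_le_one_div_of_le (by positivity)
      have : (n:ℝ) ≤ m := by exact_mod_cast hnm
      linarith
    linarith))

lemma exists_small (g : E4 → ℝ) (hg : Measurable g) (h0 : distFn g 0 ≠ ∞)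
    {t : ℝ} (ht : 0 < t) : ∃ s : ℝ, 0 ≤ s ∧ distFn g s ≤ ENNReal.ofReal t := by
  have hmono : ∀ (n m : ℕ), n ≤ m → {x : E4 | (m:ℝ) < |g x|} ⊆ {x : E4 | (n:ℝ) < |g x|} := by
    intro n m hnm x hx
    simp only [Set.mem_setOf_eq] at *
    have : (n:ℝ) ≤ m := by exact_mod_cast hnm
    linarith
  have hinf : ⨅ n : ℕ, distFn g n = 0 := by
    have hI : ⋂ n : ℕ, {x : E4 | (n:ℝ) < |g x|} = ∅ := by
      ext x
      simp only [Set.mem_iInter, Set.mem_setOf_eq, Set.mem_empty_iff_false, iff_false, not_forall,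
        not_lt]
      exact exists_nat_ge (|g x|)
    have hd : Directed (· ⊇ ·) (fun n : ℕ => {x : E4 | (n:ℝ) < |g x|}) :=
      directed_of_isDirected_le hmono
    have := Directed.measure_iInter (μ := (volume : Measure E4))
      (fun n => (measurableSet_lt measurable_const hg.abs).nullMeasurableSet) hd
      ⟨0, by simpa [distFn] using h0⟩
    rw [hI, measure_empty] at this
    exact this.symm ▸ rfl
  have hpos : (0:ℝ≥0∞) < ENNReal.ofReal t := ENNReal.ofReal_pos.mpr ht
  have : ⨅ n : ℕ, distFn g n < ENNReal.ofReal t := by rw [hinf]; exact hpos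
  obtain ⟨n, hn⟩ := iInf_lt_iff.mp this
  exact ⟨n, Nat.cast_nonneg n, hn.le⟩

lemma rearr_le_iff (g : E4 → ℝ) (hg : Measurable g) (hfin : ∀ s : ℝ, 0 ≤ s → distFn g s ≠ ∞)
    {t s : ℝ} (ht : 0 < t) (hs : 0 ≤ s) :
    rearr g t ≤ s ↔ distFn g s ≤ ENNReal.ofReal t := by
  set S := {s : ℝ | 0 ≤ s ∧ (volume {x : E4 | s < |g x|}).toReal ≤ t} with hS
  have hmem : ∀ s' : ℝ, s' ∈ S ↔ 0 ≤ s' ∧ (distFn g s').toReal ≤ t := fun _ => Iff.rfl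
  have hbdd : BddBelow S := ⟨0, fun x hx => hx.1⟩
  have hne : S.Nonempty := by
    obtain ⟨s', hs', hle⟩ := exists_small g hg (hfin 0 le_rfl) ht
    exact ⟨s', hs', ENNReal.toReal_le_of_le_ofReal ht.le hle⟩
  constructor
  · intro h
    have key : ∀ n : ℕ, distFn g (s + 1/(n+1)) ≤ ENNReal.ofReal t := by
      intro n
      have h1 : rearr g t < s + 1/(n+1) := lt_of_le_of_lt h (lt_add_of_pos_right s (by positivity))
      obtain ⟨s', hs'S, hs'lt⟩ := (csInf_lt_iff hbdd hne).mp h1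
      have : distFn g s' ≤ ENNReal.ofReal t := by
        rw [← ENNReal.ofReal_toReal (hfin s' hs'S.1)]
        exact ENNReal.ofReal_le_ofReal hs'S.2
      exact le_trans (distFn_anti g hs'lt.le) this
    rw [distFn_sup g s]
    exact iSup_le key
  · intro h
    exact csInf_le hbdd ⟨hs, ENNReal.toReal_le_of_le_ofReal ht.le h⟩

lemma measure_rearr_gt (g : E4 → ℝ) (hg : Measurable g) (hfin : ∀ s : ℝ, 0 ≤ s → distFn g s ≠ ∞)
    {s : ℝ} (hs : 0 ≤ s) :
    volume {t : ℝ | 0 < t ∧ s < rearr g t} = distFn g s := by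
  have hset : {t : ℝ | 0 < t ∧ s < rearr g t} = Set.Ioo 0 ((distFn g s).toReal) := by
    ext t
    simp only [Set.mem_setOf_eq, Set.mem_Ioo]
    constructor
    · rintro ⟨ht, hlt⟩
      refine ⟨ht, ?_⟩
      by_contra hcon
      push_neg at hcon
      have : distFn g s ≤ ENNReal.ofReal t := by
        rw [← ENNReal.ofReal_toReal (hfin s hs)]
        exact ENNReal.ofReal_le_ofReal hcon
      exact absurd ((rearr_le_iff g hg hfin ht hs).mpr this) (not_le.mpr hlt)
    · rintro ⟨ht, hlt⟩
      refine ⟨ht, ?_⟩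
      by_contra hcon
      push_neg at hcon
      have := (rearr_le_iff g hg hfin ht hs).mp hcon
      have := ENNReal.toReal_le_of_le_ofReal ht.le this
      linarith
  rw [hset, Real.volume_Ioo, sub_zero, ENNReal.ofReal_toReal (hfin s hs)]

def FF (y : ℝ) : ℝ := y * Real.log (2 + y)

lemma FF_nonneg {y : ℝ} (hy : 0 ≤ y) : 0 ≤ FF y :=
  mul_nonneg hy (Real.log_nonneg (by linarith))

lemma FF_strictMonoOn : StrictMonoOn FF (Set.Ici 0) := by
  intro y₁ hy₁ y₂ hy₂ h
  simp only [Set.mem_Ici] at hy₁ hy₂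
  have h1 : Real.log (2 + y₁) ≤ Real.log (2 + y₂) := Real.log_le_log (by linarith) (by linarith)
  have h2 : 0 < Real.log (2 + y₂) := Real.log_pos (by linarith)
  calc FF y₁ = y₁ * Real.log (2 + y₁) := rfl
    _ ≤ y₁ * Real.log (2 + y₂) := by nlinarith
    _ < y₂ * Real.log (2 + y₂) := by nlinarith
    _ = FF y₂ := rfl

lemma FF_continuousAt (y : ℝ) (hy : 0 ≤ y) : ContinuousAt FF y := by
  apply ContinuousAt.mul continuousAt_id
  exact (Real.continuousAt_log (by positivity : (0:ℝ) < 2 + y).ne').comp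
    (continuousAt_const.add continuousAt_id)

/-- Generalized inverse of FF. -/
def FFinv (s : ℝ) : ℝ := sInf {y : ℝ | 0 ≤ y ∧ s ≤ FF y}

lemma FFinv_nonneg (s : ℝ) : 0 ≤ FFinv s := Real.sInf_nonneg (fun _ hx => hx.1)

lemma FF_lt_iff {s y : ℝ} (hs : 0 < s) (hy : 0 ≤ y) : s < FF y ↔ FFinv s < y := by
  set T := {y : ℝ | 0 ≤ y ∧ s ≤ FF y} with hT
  have hbdd : BddBelow T := ⟨0, fun x hx => hx.1⟩
  have hne : T.Nonempty := by
    refine ⟨s / Real.log 2, by positivity, ?_⟩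
    have hl2 : (0:ℝ) < Real.log 2 := Real.log_pos (by norm_num)
    have h0 : 0 ≤ s / Real.log 2 := by positivity
    calc s = (s / Real.log 2) * Real.log 2 := by field_simp
      _ ≤ (s / Real.log 2) * Real.log (2 + s / Real.log 2) := by
          apply mul_le_mul_of_nonneg_left _ h0
          exact Real.log_le_log (by norm_num) (by linarith)
      _ = FF (s / Real.log 2) := rfl
  constructor
  · intro h
    have hy0 : 0 < y := by
      rcases eq_or_lt_of_le hy with h0 | h0
      · exfalso; rw [← h0] at h; simp [FF] at h; linarith
      · exact h0
    have hc := FF_continuousAt y hy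
    rw [Metric.continuousAt_iff] at hc
    obtain ⟨δ, hδ, hcl⟩ := hc (FF y - s) (by linarith)
    set z := max 0 (max (y - δ/2) (y/2)) with hz
    have hz0 : 0 ≤ z := le_max_left _ _
    have hzy : z < y := by
      apply max_lt hy0
      apply max_lt (by linarith) (by linarith)
    have hzd : dist z y < δ := by
      rw [Real.dist_eq, abs_lt]
      constructor
      · have : y - δ/2 ≤ z := le_trans (le_max_left _ _) (le_max_right _ _)
        linarith
      · linarith
    have := hcl hzd
    rw [Real.dist_eq, abs_lt] at this
    have hsz : s < FF z := by linarith
    have : FFinv s ≤ z := csInf_le hbdd ⟨hz0, hsz.le⟩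
    linarith
  · intro h
    obtain ⟨y', hy'T, hy'lt⟩ := (csInf_lt_iff hbdd hne).mp h
    calc s ≤ FF y' := hy'T.2
      _ < FF y := FF_strictMonoOn hy'T.1 hy hy'lt

/-- Lemma: for `f ∈ L log L(B_r(x₀))`, `r ∈ (0, 1/2]`, one has
`‖f‖_{L¹(B_r(x₀))} ≤ C (log(1/r))⁻¹ ‖f‖_{L log L(B_r(x₀))}` with a universal constant. -/
theorem l1_bound_by_LlogL :
    ∃ C : ℝ, 0 < C ∧ ∀ (f : E4 → ℝ) (x₀ : E4) (r : ℝ),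
      0 < r → r ≤ 1 / 2 → Measurable f → MemLlogL f (ball x₀ r) →
      ∫ x in ball x₀ r, |f x| ≤ C * (Real.log (1 / r))⁻¹ * LlogL f (ball x₀ r) := by
  refine ⟨2, by norm_num, ?_⟩
  intro f x₀ r hr0 hr2 hf hMem
  set B := ball x₀ r with hB
  have hBmeas : MeasurableSet B := measurableSet_ball
  set g : E4 → ℝ := B.indicator f with hg
  have hgmeas : Measurable g := hf.indicator hBmeas
  have hsubB : ∀ s : ℝ, 0 ≤ s → {x : E4 | s < |g x|} ⊆ B := by
    intro s hs x hx
    simp only [Set.mem_setOf_eq] at hx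
    by_contra hxB
    rw [hg, Set.indicator_of_notMem hxB] at hx
    simp only [abs_zero] at hx
    linarith
  have hfin : ∀ s : ℝ, 0 ≤ s → distFn g s ≠ ∞ :=
    fun s hs => (lt_of_le_of_lt (measure_mono (hsubB s hs)) measure_ball_lt_top).ne
  -- antitonicity / measurability of the rearrangement
  have h_anti : AntitoneOn (rearr g) (Set.Ioi 0) := by
    intro t₁ ht₁ t₂ ht₂ h12
    apply csInf_le_csInf ⟨0, fun x hx => hx.1⟩
    · obtain ⟨s', hs1, hs2⟩ := exists_small g hgmeas (hfin 0 le_rfl) ht₁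
      exact ⟨s', hs1, ENNReal.toReal_le_of_le_ofReal (le_of_lt ht₁) hs2⟩
    · intro x hx
      exact ⟨hx.1, hx.2.trans h12⟩
  have h_am : AEMeasurable (rearr g) (volume.restrict (Set.Ioi 0)) :=
    aemeasurable_restrict_of_antitoneOn measurableSet_Ioi h_anti
  -- volume bounds
  set V := (volume B).toReal with hV
  have hVpos : 0 < V := ENNReal.toReal_pos (measure_ball_pos volume x₀ hr0).ne' measure_ball_lt_top.ne
  have hvolB : volume B ≤ ENNReal.ofReal (16 * r ^ 4) := by
    rw [hB, EuclideanSpace.volume_ball]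
    simp only [Fintype.card_fin]
    have hG : Real.Gamma ((4:ℕ) / 2 + 1) = 2 := by
      rw [show ((4:ℕ):ℝ) / 2 + 1 = (2:ℕ) + 1 by norm_num, Real.Gamma_nat_eq_factorial]
      norm_num
    have hsq : Real.sqrt π ^ 4 = π ^ 2 := by
      rw [show (4:ℕ) = 2 * 2 from rfl, pow_mul, Real.sq_sqrt Real.pi_nonneg]
    rw [hG, hsq]
    have hpi : π ^ 2 / 2 ≤ 16 := by nlinarith [Real.pi_le_four, Real.pi_nonneg]
    calc (ENNReal.ofReal r) ^ 4 * ENNReal.ofReal (π ^ 2 / 2)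
        = ENNReal.ofReal (r ^ 4 * (π ^ 2 / 2)) := by
          rw [← ENNReal.ofReal_pow hr0.le, ← ENNReal.ofReal_mul (by positivity)]
      _ ≤ ENNReal.ofReal (16 * r ^ 4) := by
          apply ENNReal.ofReal_le_ofReal
          nlinarith [pow_nonneg hr0.le 4]
  have hV16 : V ≤ 16 * r ^ 4 := ENNReal.toReal_le_of_le_ofReal (by positivity) hvolB
  have hV1 : V ≤ 1 := by
    have : r ^ 4 ≤ (1/2 : ℝ) ^ 4 := pow_le_pow_left₀ hr0.le hr2 4
    nlinarith
  set L := Real.log (1 / r) with hL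
  have hr1 : r < 1 := lt_of_le_of_lt hr2 (by norm_num)
  have hLpos : 0 < L := Real.log_pos (by rw [lt_div_iff₀ hr0]; linarith)
  -- the logarithmic lower bound
  have hlogb : ∀ t : ℝ, 0 < t → t < V → L / 2 ≤ Real.log (2 + 1 / t) := by
    intro t ht htV
    have h1t : 0 < 1 / t := by positivity
    have hl2 : Real.log 2 ≤ Real.log (2 + 1 / t) := Real.log_le_log (by norm_num) (by linarith)
    have hlt16 : t < 16 * r ^ 4 := lt_of_lt_of_le htV hV16
    have hmid : Real.log (1 / (16 * r ^ 4)) ≤ Real.log (2 + 1 / t) := by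
      apply Real.log_le_log (by positivity)
      have h16 : 1 / (16 * r ^ 4) ≤ 1 / t := one_div_le_one_div_of_le ht hlt16.le
      linarith
    have hLr : L = -Real.log r := by rw [hL, one_div, Real.log_inv]
    have h16 : Real.log (16 * r ^ 4) = 4 * Real.log 2 + 4 * Real.log r := by
      rw [Real.log_mul (by norm_num) (by positivity), show (16:ℝ) = 2 ^ 4 by norm_num,
        Real.log_pow, Real.log_pow]
      push_cast; ring
    have hcalc : Real.log (1 / (16 * r ^ 4)) = 4 * L - 4 * Real.log 2 := by
      rw [one_div, Real.log_inv, h16, hLr]; ring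
    have hlog2 : 0 < Real.log 2 := Real.log_pos (by norm_num)
    rw [hcalc] at hmid
    rcases le_or_gt L (2 * Real.log 2) with hc | hc
    · linarith
    · linarith
  -- transfer lintegral over B to full space
  have eqB : ∀ φ : ℝ → ℝ, φ 0 = 0 →
      (∫⁻ x in B, ENNReal.ofReal (φ |f x|)) = ∫⁻ x, ENNReal.ofReal (φ |g x|) := by
    intro φ hφ0
    rw [← lintegral_indicator hBmeas (fun x => ENNReal.ofReal (φ |f x|))]
    apply lintegral_congr
    intro x
    by_cases hx : x ∈ B
    · simp [hg, Set.indicator_of_mem hx]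
    · simp [hg, Set.indicator_of_notMem hx, hφ0]
  -- layer cake for |g|
  have lc1 : ∫⁻ x, ENNReal.ofReal (|g x|) = ∫⁻ s in Set.Ioi (0:ℝ), distFn g s :=
    lintegral_eq_lintegral_meas_lt volume (ae_of_all _ fun x => abs_nonneg (g x))
      hgmeas.abs.aemeasurable
  -- layer cake for rearr g
  have lc2 : ∫⁻ t in Set.Ioi (0:ℝ), ENNReal.ofReal (rearr g t)
      = ∫⁻ s in Set.Ioi (0:ℝ), distFn g s := by
    rw [lintegral_eq_lintegral_meas_lt (volume.restrict (Set.Ioi 0))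
      (ae_of_all _ fun t => rearr_nonneg g t) h_am]
    apply setLIntegral_congr_fun measurableSet_Ioi
    intro s hs
    dsimp only
    rw [Measure.restrict_apply' measurableSet_Ioi,
      show {t : ℝ | s < rearr g t} ∩ Set.Ioi 0 = {t : ℝ | 0 < t ∧ s < rearr g t} by
        ext t; simp only [Set.mem_inter_iff, Set.mem_setOf_eq, Set.mem_Ioi]; tauto]
    exact measure_rearr_gt g hgmeas hfin (le_of_lt hs)
  have keyI : ∫⁻ x in B, ENNReal.ofReal (|f x|)
      = ∫⁻ t in Set.Ioi (0:ℝ), ENNReal.ofReal (rearr g t) := by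
    rw [eqB (fun y => y) rfl, lc1, lc2]
  -- vanishing beyond V
  have hzero : ∀ t : ℝ, V ≤ t → rearr g t = 0 := by
    intro t htV
    refine le_antisymm ?_ (rearr_nonneg g t)
    apply csInf_le ⟨0, fun x hx => hx.1⟩
    refine ⟨le_rfl, ?_⟩
    have h1 : distFn g 0 ≤ volume B := measure_mono (hsubB 0 le_rfl)
    have h2 : (distFn g 0).toReal ≤ V := ENNReal.toReal_mono measure_ball_lt_top.ne h1
    exact le_trans h2 htV
  have hsplit : ∫⁻ t in Set.Ioi (0:ℝ), ENNReal.ofReal (rearr g t)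
      = ∫⁻ t in Set.Ioo 0 V, ENNReal.ofReal (rearr g t) := by
    rw [← Set.Ioo_union_Ici_eq_Ioi hVpos, lintegral_union measurableSet_Ici
      (by rw [Set.disjoint_left]; rintro t ⟨_, h2⟩ h3; exact absurd h3 (not_le.mpr h2))]
    have hz : ∫⁻ t in Set.Ici V, ENNReal.ofReal (rearr g t) = ∫⁻ _ in Set.Ici V, (0:ℝ≥0∞) :=
      setLIntegral_congr_fun measurableSet_Ici
        (fun t ht => by rw [hzero t ht, ENNReal.ofReal_zero])
    rw [hz, lintegral_zero, add_zero]
  -- the L log L integrand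
  have hlogmeas : Measurable (fun t : ℝ => Real.log (2 + 1 / t)) :=
    Real.measurable_log.comp (measurable_const.add (measurable_const.div measurable_id))
  have h_am' : AEMeasurable (rearr g) (volume.restrict (Set.Ioo 0 V)) :=
    h_am.mono_measure (Measure.restrict_mono Set.Ioo_subset_Ioi_self le_rfl)
  have hinteg_am : AEMeasurable (fun t => rearr g t * Real.log (2 + 1 / t))
      (volume.restrict (Set.Ioo 0 V)) := h_am'.mul hlogmeas.aemeasurable
  have hinteg_nn : 0 ≤ᵐ[volume.restrict (Set.Ioo 0 V)]
      fun t => rearr g t * Real.log (2 + 1 / t) := by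
    refine (ae_restrict_iff' measurableSet_Ioo).mpr (ae_of_all _ ?_)
    intro t ht
    obtain ⟨ht0, -⟩ := ht
    have h1t : 0 < 1 / t := by positivity
    exact mul_nonneg (rearr_nonneg g t) (Real.log_nonneg (by linarith))
  set J := ∫⁻ t in Set.Ioo 0 V, ENNReal.ofReal (rearr g t * Real.log (2 + 1 / t)) with hJ
  have hLlogLJ : LlogL f B = J.toReal := by
    rw [show LlogL f B = ∫ t in Set.Ioo 0 V, rearr g t * Real.log (2 + 1 / t) from rfl,
      integral_eq_lintegral_of_nonneg_ae hinteg_nn hinteg_am.aestronglyMeasurable]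
  -- main pointwise inequality
  have hmain : ENNReal.ofReal (L / 2) * (∫⁻ t in Set.Ioo 0 V, ENNReal.ofReal (rearr g t)) ≤ J := by
    rw [← lintegral_const_mul' (ENNReal.ofReal (L / 2)) _ ENNReal.ofReal_ne_top]
    apply lintegral_mono_ae
    rw [ae_restrict_iff' measurableSet_Ioo]
    apply ae_of_all
    intro t ht
    rw [← ENNReal.ofReal_mul (by positivity : (0:ℝ) ≤ L / 2)]
    apply ENNReal.ofReal_le_ofReal
    calc L / 2 * rearr g t = rearr g t * (L / 2) := mul_comm _ _
      _ ≤ rearr g t * Real.log (2 + 1 / t) :=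
          mul_le_mul_of_nonneg_left (hlogb t ht.1 ht.2) (rearr_nonneg g t)
  -- integrability of the singular weight
  have hphimeas : Measurable (fun t : ℝ => (Real.sqrt t)⁻¹ * Real.log (2 + 1 / t)) :=
    (Real.continuous_sqrt.measurable.inv).mul hlogmeas
  have hphi_int : IntegrableOn (fun t : ℝ => (Real.sqrt t)⁻¹ * Real.log (2 + 1 / t))
      (Set.Ioo 0 V) := by
    have hhalf : IntegrableOn (fun t : ℝ => t ^ (-(1:ℝ) / 2)) (Set.Ioo 0 V) := by
      have h1 := intervalIntegral.intervalIntegrable_rpow' (r := -(1:ℝ) / 2) (by norm_num) (a := 0) (b := V)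
      rw [intervalIntegrable_iff, Set.uIoc_of_le hVpos.le] at h1
      exact h1.mono_set Set.Ioo_subset_Ioc_self
    have h34 : IntegrableOn (fun t : ℝ => t ^ (-(3:ℝ) / 4)) (Set.Ioo 0 V) := by
      have h1 := intervalIntegral.intervalIntegrable_rpow' (r := -(3:ℝ) / 4) (by norm_num) (a := 0) (b := V)
      rw [intervalIntegrable_iff, Set.uIoc_of_le hVpos.le] at h1
      exact h1.mono_set Set.Ioo_subset_Ioc_self
    have hpsi_int : IntegrableOn
        (fun t : ℝ => Real.log 3 * t ^ (-(1:ℝ) / 2) + 4 * t ^ (-(3:ℝ) / 4)) (Set.Ioo 0 V) :=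
      (hhalf.const_mul _).add (h34.const_mul _)
    apply Integrable.mono' hpsi_int hphimeas.aestronglyMeasurable
    rw [ae_restrict_iff' measurableSet_Ioo]
    apply ae_of_all
    intro t ht
    obtain ⟨ht0, htV⟩ := ht
    have h1t : 0 < 1 / t := by positivity
    have hs : 0 < Real.sqrt t := Real.sqrt_pos.mpr ht0
    have hlog_nn : 0 ≤ Real.log (2 + 1 / t) := Real.log_nonneg (by linarith)
    rw [Real.norm_eq_abs, abs_of_nonneg (by positivity)]
    have ht1 : t ≤ 1 := le_trans htV.le hV1
    have hlog_le : Real.log (2 + 1 / t) ≤ Real.log 3 + Real.log (1 / t) := by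
      have h3t : 2 + 1 / t ≤ 3 * (1 / t) := by
        rw [mul_one_div, le_div_iff₀ ht0]
        have hexp : (2 + 1 / t) * t = 2 * t + 1 := by field_simp
        rw [hexp]
        linarith
      calc Real.log (2 + 1 / t) ≤ Real.log (3 * (1 / t)) :=
            Real.log_le_log (by positivity) h3t
        _ = Real.log 3 + Real.log (1 / t) := Real.log_mul (by norm_num) (by positivity)
    have hlog14 : Real.log (1 / t) ≤ 4 * t ^ (-(1:ℝ) / 4) := by
      have h4 : Real.log (1 / t) = 4 * Real.log ((1 / t) ^ ((1:ℝ) / 4)) := by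
        rw [Real.log_rpow (by positivity)]; ring
      have hle : Real.log ((1 / t) ^ ((1:ℝ) / 4)) ≤ (1 / t) ^ ((1:ℝ) / 4) :=
        (Real.log_le_sub_one_of_pos (by positivity)).trans (by linarith)
      have heq : (1 / t) ^ ((1:ℝ) / 4) = t ^ (-(1:ℝ) / 4) := by
        rw [one_div, Real.inv_rpow ht0.le, ← Real.rpow_neg ht0.le]
        norm_num
      rw [h4, ← heq]
      linarith
    have hsqrt : (Real.sqrt t)⁻¹ = t ^ (-(1:ℝ) / 2) := by
      rw [Real.sqrt_eq_rpow, ← Real.rpow_neg ht0.le]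
      norm_num
    have hprod : t ^ (-(1:ℝ) / 2) * t ^ (-(1:ℝ) / 4) = t ^ (-(3:ℝ) / 4) := by
      rw [← Real.rpow_add ht0]; norm_num
    have hpos2 : (0:ℝ) ≤ t ^ (-(1:ℝ) / 2) := Real.rpow_nonneg ht0.le _
    calc (Real.sqrt t)⁻¹ * Real.log (2 + 1 / t)
        ≤ t ^ (-(1:ℝ) / 2) * (Real.log 3 + 4 * t ^ (-(1:ℝ) / 4)) := by
          rw [hsqrt]
          exact mul_le_mul_of_nonneg_left (by linarith) hpos2
      _ = Real.log 3 * t ^ (-(1:ℝ) / 2) + 4 * (t ^ (-(1:ℝ) / 2) * t ^ (-(1:ℝ) / 4)) := by ring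
      _ = Real.log 3 * t ^ (-(1:ℝ) / 2) + 4 * t ^ (-(3:ℝ) / 4) := by rw [hprod]
  have hK1 : (∫⁻ t in Set.Ioo 0 V, ENNReal.ofReal ((Real.sqrt t)⁻¹ * Real.log (2 + 1 / t))) < ∞ :=
    lt_of_le_of_lt (lintegral_mono fun t => Real.ofReal_le_enorm _) hphi_int.2
  -- equimeasurability for FF
  have hFFmeas : Measurable FF :=
    measurable_id.mul (Real.measurable_log.comp (measurable_const.add measurable_id))
  have equi : ∫⁻ t in Set.Ioi (0:ℝ), ENNReal.ofReal (FF (rearr g t))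
      = ∫⁻ x, ENNReal.ofReal (FF (|g x|)) := by
    rw [lintegral_eq_lintegral_meas_lt (volume.restrict (Set.Ioi 0))
        (ae_of_all _ fun t => FF_nonneg (rearr_nonneg g t)) (hFFmeas.comp_aemeasurable h_am),
      lintegral_eq_lintegral_meas_lt volume
        (ae_of_all _ fun x => FF_nonneg (abs_nonneg _)) (hFFmeas.comp hgmeas.abs).aemeasurable]
    apply setLIntegral_congr_fun measurableSet_Ioi
    intro s hs
    dsimp only
    rw [Measure.restrict_apply' measurableSet_Ioi]
    have hseteq1 : {t : ℝ | s < FF (rearr g t)} ∩ Set.Ioi 0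
        = {t : ℝ | 0 < t ∧ FFinv s < rearr g t} := by
      ext t
      simp only [Set.mem_inter_iff, Set.mem_setOf_eq, Set.mem_Ioi]
      constructor
      · rintro ⟨h1, h2⟩; exact ⟨h2, (FF_lt_iff hs (rearr_nonneg g t)).mp h1⟩
      · rintro ⟨h1, h2⟩; exact ⟨(FF_lt_iff hs (rearr_nonneg g t)).mpr h2, h1⟩
    have hseteq2 : {x : E4 | s < FF (|g x|)} = {x : E4 | FFinv s < |g x|} := by
      ext x
      exact FF_lt_iff hs (abs_nonneg _)
    rw [hseteq1, hseteq2, measure_rearr_gt g hgmeas hfin (FFinv_nonneg s)]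
    rfl
  have hK2fin : (∫⁻ x, ENNReal.ofReal (FF (|g x|))) < ∞ := by
    rw [← eqB FF (by simp [FF])]
    exact lt_of_le_of_lt (lintegral_mono fun x => Real.ofReal_le_enorm _) hMem.2
  have hK2 : (∫⁻ t in Set.Ioo 0 V, ENNReal.ofReal (2 * FF (rearr g t))) < ∞ := by
    have hle : (∫⁻ t in Set.Ioo 0 V, ENNReal.ofReal (2 * FF (rearr g t)))
        ≤ 2 * ∫⁻ t in Set.Ioi (0:ℝ), ENNReal.ofReal (FF (rearr g t)) := by
      calc ∫⁻ t in Set.Ioo 0 V, ENNReal.ofReal (2 * FF (rearr g t))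
          = ∫⁻ t in Set.Ioo 0 V, 2 * ENNReal.ofReal (FF (rearr g t)) := by
            apply lintegral_congr
            intro t
            rw [ENNReal.ofReal_mul (by norm_num)]
            norm_num
        _ = 2 * ∫⁻ t in Set.Ioo 0 V, ENNReal.ofReal (FF (rearr g t)) :=
            lintegral_const_mul' _ _ (by norm_num)
        _ ≤ 2 * ∫⁻ t in Set.Ioi (0:ℝ), ENNReal.ofReal (FF (rearr g t)) := by
            gcongr
            exact Set.Ioo_subset_Ioi_self
    apply lt_of_le_of_lt hle
    rw [equi]
    exact ENNReal.mul_lt_top (by norm_num) hK2fin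
  -- J is finite
  have hJfin : J < ∞ := by
    have hbound : J ≤ ∫⁻ t in Set.Ioo 0 V,
        (ENNReal.ofReal ((Real.sqrt t)⁻¹ * Real.log (2 + 1 / t))
          + ENNReal.ofReal (2 * FF (rearr g t))) := by
      apply lintegral_mono_ae
      rw [ae_restrict_iff' measurableSet_Ioo]
      apply ae_of_all
      intro t ht
      obtain ⟨ht0, htV⟩ := ht
      have hh0 := rearr_nonneg g t
      have h1t : 0 < 1 / t := by positivity
      have hs : 0 < Real.sqrt t := Real.sqrt_pos.mpr ht0
      have hlog_nn : 0 ≤ Real.log (2 + 1 / t) := Real.log_nonneg (by linarith)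
      rcases le_or_gt (rearr g t) (Real.sqrt t)⁻¹ with hc | hc
      · exact (ENNReal.ofReal_le_ofReal
          (mul_le_mul_of_nonneg_right hc hlog_nn)).trans le_self_add
      · have hsq : ((Real.sqrt t)⁻¹) ^ 2 = 1 / t := by
          rw [inv_pow, Real.sq_sqrt ht0.le, one_div]
        have h1tlt : 1 / t < (rearr g t) ^ 2 := by
          rw [← hsq]
          have := mul_self_lt_mul_self (inv_nonneg.mpr hs.le) hc
          rw [pow_two, pow_two]
          exact this
        have hlog2' : Real.log (2 + 1 / t) ≤ 2 * Real.log (2 + rearr g t) := by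
          have hsq2 : 2 + 1 / t ≤ (2 + rearr g t) ^ 2 := by nlinarith
          calc Real.log (2 + 1 / t) ≤ Real.log ((2 + rearr g t) ^ 2) :=
                Real.log_le_log (by positivity) hsq2
            _ = 2 * Real.log (2 + rearr g t) := by
                rw [Real.log_pow]; push_cast; ring
        refine le_trans (ENNReal.ofReal_le_ofReal ?_) le_add_self
        calc rearr g t * Real.log (2 + 1 / t)
            ≤ rearr g t * (2 * Real.log (2 + rearr g t)) :=
              mul_le_mul_of_nonneg_left hlog2' hh0
          _ = 2 * FF (rearr g t) := by rw [FF]; ring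
    have hsum : ∫⁻ t in Set.Ioo 0 V,
        (ENNReal.ofReal ((Real.sqrt t)⁻¹ * Real.log (2 + 1 / t))
          + ENNReal.ofReal (2 * FF (rearr g t)))
        = (∫⁻ t in Set.Ioo 0 V, ENNReal.ofReal ((Real.sqrt t)⁻¹ * Real.log (2 + 1 / t)))
          + ∫⁻ t in Set.Ioo 0 V, ENNReal.ofReal (2 * FF (rearr g t)) :=
      lintegral_add_left (hphimeas.ennreal_ofReal) _
    exact lt_of_le_of_lt hbound (by rw [hsum]; exact ENNReal.add_lt_top.mpr ⟨hK1, hK2⟩)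
  -- conclusion
  have hchain : ENNReal.ofReal (L / 2) * (∫⁻ x in B, ENNReal.ofReal (|f x|)) ≤ J := by
    rw [keyI, hsplit]
    exact hmain
  have hIf : ∫ x in B, |f x| = (∫⁻ x in B, ENNReal.ofReal (|f x|)).toReal := by
    rw [integral_eq_lintegral_of_nonneg_ae (ae_of_all _ fun x => abs_nonneg (f x))
      hf.abs.aestronglyMeasurable.restrict]
  have hfinal : L / 2 * ∫ x in B, |f x| ≤ LlogL f B := by
    rw [hIf, hLlogLJ]
    have hmono := ENNReal.toReal_mono hJfin.ne hchain
    rw [ENNReal.toReal_mul, ENNReal.toReal_ofReal (by positivity : (0:ℝ) ≤ L / 2)] at hmono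
    exact hmono
  have hkey := mul_le_mul_of_nonneg_left hfinal (show (0:ℝ) ≤ 2 / L by positivity)
  have hA : 2 / L * (L / 2 * ∫ x in B, |f x|) = ∫ x in B, |f x| := by
    field_simp
  have hC : 2 / L * LlogL f B = 2 * L⁻¹ * LlogL f B := by
    rw [div_eq_mul_inv]
  rw [← hC]
  calc ∫ x in B, |f x| = 2 / L * (L / 2 * ∫ x in B, |f x|) := hA.symm
    _ ≤ 2 / L * LlogL f B := hkey
end
end

section
/- Let φ: [0,∞) → [0,∞) be increasing with lim_{t→∞} φ(t)/(t log t) = ∞, and let {f_k} satisfy ∫ φ(|f_k|) ≤ Λ uniformly. Then lim_{δ→0} sup_k ‖f_k‖_{L log L(B_{2δ})} = 0; i.e., the L log L norms of f_k do not concentrate. -/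
open MeasureTheory Metric Real Filter

noncomputable section

set_option maxHeartbeats 1000000 in
/-- Non-concentration of the `L log L` norm under a uniform Orlicz bound: if
`φ : [0,∞) → [0,∞)` is increasing with `φ(t)/(t log t) → ∞` and `∫ φ(|f_k|) ≤ Λ` uniformly,
then `lim_{δ→0} sup_k ‖f_k‖_{L log L(B_{2δ})} = 0`, where
`‖f‖_{L log L(E)} = ∫_E |f| log(2 + |f|)`. -/
theorem LlogL_non_concentration
    (φ : ℝ → ℝ) (hφ0 : ∀ t, 0 ≤ t → 0 ≤ φ t) (hmono : MonotoneOn φ (Set.Ici 0))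
    (hgrow : Tendsto (fun t => φ t / (t * Real.log t)) atTop atTop)
    (f : ℕ → E4 → ℝ) (Λ : ℝ)
    (hmeas : ∀ k, Measurable (f k))
    (hint : ∀ k, Integrable (fun x => φ |f k x|))
    (hbd : ∀ k, (∫ x, φ |f k x|) ≤ Λ) :
    ∀ ε > (0:ℝ), ∃ δ₀ > (0:ℝ), ∀ δ : ℝ, 0 < δ → δ ≤ δ₀ → ∀ k,
      (∫ x in ball (0:E4) (2 * δ), |f k x| * Real.log (2 + |f k x|)) < ε := by
  intro ε hε
  -- Λ is nonnegative
  have hΛ0 : 0 ≤ Λ := le_trans (integral_nonneg fun x => hφ0 _ (abs_nonneg _)) (hbd 0)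
  -- choose C
  set C : ℝ := max 1 (4 * (Λ + 1) / ε) with hC
  have hC1 : 1 ≤ C := le_max_left _ _
  have hC0 : 0 < C := lt_of_lt_of_le one_pos hC1
  have hCge : 4 * (Λ + 1) / ε ≤ C := le_max_right _ _
  -- choose M from growth
  obtain ⟨M₀, hM₀⟩ := eventually_atTop.mp (hgrow.eventually_ge_atTop C)
  set M : ℝ := max M₀ 2 with hM
  have hM2 : (2:ℝ) ≤ M := le_max_right _ _
  have hM0 : 0 ≤ M := by linarith
  set K : ℝ := M * Real.log (2 + M) with hK
  have hK0 : 0 ≤ K := mul_nonneg hM0 (Real.log_nonneg (by linarith))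
  -- pointwise bound
  have key : ∀ t : ℝ, 0 ≤ t → t * Real.log (2 + t) ≤ K + (2 / C) * φ t := by
    intro t ht
    rcases le_or_gt t M with h | h
    · have h1 : t * Real.log (2 + t) ≤ K := by
        apply mul_le_mul h (Real.log_le_log (by linarith) (by linarith)) (Real.log_nonneg (by linarith)) hM0
      have h2 : 0 ≤ (2 / C) * φ t := mul_nonneg (by positivity) (hφ0 t ht)
      linarith
    · have ht2 : (2:ℝ) ≤ t := le_trans hM2 h.le
      have hlt : 0 < Real.log t := Real.log_pos (by linarith)
      have htl : 0 < t * Real.log t := by positivity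
      have hφt : C * (t * Real.log t) ≤ φ t := by
        have := hM₀ t (le_trans (le_max_left _ _) h.le)
        rw [le_div_iff₀ htl] at this
        linarith
      have hlog : Real.log (2 + t) ≤ 2 * Real.log t := by
        have h2t : 2 + t ≤ t ^ 2 := by nlinarith
        calc Real.log (2 + t) ≤ Real.log (t ^ 2) := Real.log_le_log (by linarith) h2t
          _ = 2 * Real.log t := by rw [Real.log_pow]; push_cast; ring
      have h1 : t * Real.log (2 + t) ≤ 2 * (t * Real.log t) := by nlinarith
      have h2 : 2 * (t * Real.log t) ≤ (2 / C) * φ t := by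
        rw [div_mul_eq_mul_div, le_div_iff₀ hC0]
        nlinarith
      linarith
    -- volume constant
  set v : ℝ := (volume (ball (0:E4) 1)).toReal with hv
  have hv0 : 0 ≤ v := ENNReal.toReal_nonneg
  clear_value v K M C
  -- choose δ₀
  refine ⟨min 1 (ε / (2 * (16 * K * v + 1))), lt_min one_pos (by positivity), ?_⟩
  intro δ hδ hδ₀ k
  have hδ1 : δ ≤ 1 := le_trans hδ₀ (min_le_left _ _)
  have hδ2 : δ ≤ ε / (2 * (16 * K * v + 1)) := le_trans hδ₀ (min_le_right _ _)
  set s := ball (0:E4) (2 * δ)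
  -- volume of the ball
  have hvol : (volume s).toReal = (2 * δ) ^ 4 * v := by
    rw [hv, show s = ball (0:E4) (2*δ) from rfl,
      Measure.addHaar_ball volume (0:E4) (by linarith : (0:ℝ) ≤ 2 * δ)]
    simp [ENNReal.toReal_mul, ENNReal.toReal_ofReal (by positivity : (0:ℝ) ≤ (2*δ)^(4:ℕ))]
  -- integrability
  have hsfin : volume s < ⊤ := measure_ball_lt_top
  have hconst : IntegrableOn (fun _ : E4 => K) s volume :=
    integrableOn_const hsfin.ne
  have hφint : IntegrableOn (fun x => (2 / C) * φ |f k x|) s volume :=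
    ((hint k).const_mul (2 / C)).integrableOn
  have hhint : IntegrableOn (fun x => K + (2 / C) * φ |f k x|) s volume := hconst.add hφint
  have hgmeas : Measurable fun x => |f k x| * Real.log (2 + |f k x|) :=
    (hmeas k).abs.mul (Real.measurable_log.comp (measurable_const.add (hmeas k).abs))
  have hgnonneg : ∀ x, 0 ≤ |f k x| * Real.log (2 + |f k x|) := fun x =>
    mul_nonneg (abs_nonneg _) (Real.log_nonneg (by linarith [abs_nonneg (f k x)]))
  have hgint : IntegrableOn (fun x => |f k x| * Real.log (2 + |f k x|)) s volume := by
    apply Integrable.mono' hhint hgmeas.aestronglyMeasurable.restrict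
    filter_upwards with x
    rw [Real.norm_eq_abs, abs_of_nonneg (hgnonneg x)]
    exact key _ (abs_nonneg _)
  -- main estimate
  have step1 : (∫ x in s, |f k x| * Real.log (2 + |f k x|))
      ≤ ∫ x in s, (K + (2 / C) * φ |f k x|) :=
    integral_mono hgint hhint fun x => key _ (abs_nonneg _)
  have step2 : (∫ x in s, (K + (2 / C) * φ |f k x|))
      = K * (volume s).toReal + (2 / C) * ∫ x in s, φ |f k x| := by
    rw [integral_add hconst hφint, setIntegral_const, integral_const_mul, smul_eq_mul, mul_comm, measureReal_def]
  have step3 : (∫ x in s, φ |f k x|) ≤ Λ :=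
    le_trans (setIntegral_le_integral (hint k)
      (Filter.Eventually.of_forall fun x => hφ0 _ (abs_nonneg _))) (hbd k)
  have hC2 : (2 / C) * Λ < ε / 2 := by
    have h1 : 2 / C ≤ ε / (2 * (Λ + 1)) := by
      rw [div_le_div_iff₀ hC0 (by positivity)]
      calc 2 * (2 * (Λ + 1)) = ε * (4 * (Λ + 1) / ε) := by field_simp; ring
        _ ≤ ε * C := by nlinarith
    have h2 : (2 / C) * Λ ≤ (ε / (2 * (Λ + 1))) * Λ :=
      mul_le_mul_of_nonneg_right h1 hΛ0
    have h3 : (ε / (2 * (Λ + 1))) * Λ < ε / 2 := by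
      rw [div_mul_eq_mul_div, div_lt_div_iff₀ (by positivity) two_pos]
      nlinarith
    linarith
  have hvolsmall : K * (volume s).toReal < ε / 2 := by
    rw [hvol]
    have hd3 : δ ^ 3 ≤ 1 := pow_le_one₀ hδ.le hδ1
    have h4 : (2 * δ) ^ 4 ≤ 16 * δ := by nlinarith [hδ.le]
    have h5 : K * ((2 * δ) ^ 4 * v) ≤ 16 * K * v * δ := by
      nlinarith [mul_le_mul_of_nonneg_left (mul_le_mul_of_nonneg_right h4 hv0) hK0]
    have h6 : (16 * K * v) * δ ≤ (16 * K * v) * (ε / (2 * (16 * K * v + 1))) :=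
      mul_le_mul_of_nonneg_left hδ2 (by positivity)
    have h7 : (16 * K * v) * (ε / (2 * (16 * K * v + 1))) < ε / 2 := by
      rw [mul_div_assoc', div_lt_div_iff₀ (by positivity) two_pos]
      nlinarith [mul_nonneg hK0 hv0]
    linarith
  calc (∫ x in s, |f k x| * Real.log (2 + |f k x|))
      ≤ K * (volume s).toReal + (2 / C) * ∫ x in s, φ |f k x| := by rw [← step2]; exact step1
    _ ≤ K * (volume s).toReal + (2 / C) * Λ := by
        have := mul_le_mul_of_nonneg_left step3 (le_of_lt (by positivity : (0:ℝ) < 2 / C))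
        linarith
    _ < ε := by linarith
end
end
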